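/- Let X be a compact Hausdorff non-scattered space with perfect kernel K = ker(X), and A a closed subalgebra of C(X) separating points and containing constants. Then A↾K is closed in C(K), and every clopen subset of K whose characteristic function lies in A↾K is of the form H ∩ K for some clopen H ⊆ X with χ_H ∈ A. -/

import Mathlib

open Classical Set

/-- `χ_H ∈ A`. -/
noncomputable def chiMem {X : Type*} [TopologicalSpace X]
    (A : Subalgebra ℂ C(X, ℂ)) (H : Set X) : Prop :=
  ∃ g ∈ A, ∀ x, g x = if x ∈ H then (1 : ℂ) else 0

/-- The restriction algebra `A↾K`. -/
def restrictSet {X : Type*} [TopologicalSpace X] (A : Subalgebra ℂ C(X, ℂ)) (K : Set X) :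
    Set C(K, ℂ) :=
  {g | ∃ f ∈ A, f.restrict K = g}

open Metric MeasureTheory intervalIntegral

/-- If a compact set `Z` in a T2 space contains no nonempty perfect subset, then any continuous
image of it in a second-countable T2 space is countable. -/
theorem countable_image_of_no_perfect {X Y : Type*} [TopologicalSpace X] [T2Space X]
    [TopologicalSpace Y] [T2Space Y] [SecondCountableTopology Y]
    {Z : Set X} (hZ : IsCompact Z)
    (hscat : ∀ P : Set X, P ⊆ Z → Perfect P → P = ∅)
    {g : X → Y} (hg : Continuous g) : (g '' Z).Countable := by
  obtain ⟨V, D, hVct, hDperf, hVD⟩ :=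
    exists_countable_union_perfect_of_isClosed (C := g '' Z)
      (hZ.image hg).isClosed
  rcases eq_empty_or_nonempty D with hD | hD
  · rw [hVD, hD, union_empty]; exact hVct
  -- D is a nonempty perfect subset of g '' Z
  exfalso
  have hDsub : D ⊆ g '' Z := hVD ▸ subset_union_right
  -- Zorn: minimal compact subset of Z mapping onto D
  set S : Set (Set X) := {W | W ⊆ Z ∧ IsClosed W ∧ D ⊆ g '' W} with hS
  have hzorn : ∀ c ⊆ S, IsChain (· ⊆ ·) c → c.Nonempty → ∃ lb ∈ S, ∀ s ∈ c, lb ⊆ s := by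
      intro c hcS hchain hcne
      refine ⟨⋂₀ c, ⟨?_, ?_, ?_⟩, fun s hs => sInter_subset_of_mem hs⟩
      · exact (sInter_subset_of_mem hcne.choose_spec).trans (hcS hcne.choose_spec).1
      · exact isClosed_sInter fun s hs => (hcS hs).2.1
      · intro d hd
        have hne : ∀ s : c, ((s : Set X) ∩ g ⁻¹' {d}).Nonempty := by
          rintro ⟨s, hs⟩
          obtain ⟨x, hx, hgx⟩ := (hcS hs).2.2 hd
          exact ⟨x, hx, by simpa using hgx⟩
        haveI : Nonempty c := ⟨⟨hcne.choose, hcne.choose_spec⟩⟩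
        have hdir : Directed (· ⊇ ·) (fun s : c => (s : Set X) ∩ g ⁻¹' {d}) := by
          rintro ⟨s, hs⟩ ⟨t, ht⟩
          rcases hchain.total hs ht with h | h
          · exact ⟨⟨s, hs⟩, subset_rfl, inter_subset_inter_left _ h⟩
          · exact ⟨⟨t, ht⟩, inter_subset_inter_left _ h, subset_rfl⟩
        obtain ⟨x, hx⟩ := IsCompact.nonempty_iInter_of_directed_nonempty_isCompact_isClosed
          (fun s : c => (s : Set X) ∩ g ⁻¹' {d}) hdir hne
          (fun s => ((hZ.of_isClosed_subset (hcS s.2).2.1 (hcS s.2).1)).inter_right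
            (isClosed_singleton.preimage hg))
          (fun s => ((hcS s.2).2.1.inter (isClosed_singleton.preimage hg)))
        simp only [mem_iInter, mem_inter_iff, mem_preimage, mem_singleton_iff] at hx
        refine ⟨x, ?_, (hx ⟨hcne.choose, hcne.choose_spec⟩).2⟩
        exact mem_sInter.2 fun s hs => (hx ⟨s, hs⟩).1
  obtain ⟨m, -, hmS, hmmin⟩ : ∃ m, m ⊆ Z ∧ m ∈ S ∧ ∀ a ∈ S, a ⊆ m → a = m := by
    obtain ⟨m, hm, hmin⟩ := zorn_superset_nonempty S hzorn Z ⟨subset_rfl, hZ.isClosed, hDsub⟩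
    exact ⟨m, hm, hmin.prop, fun a ha hsub => subset_antisymm hsub (hmin.2 ha hsub)⟩
  obtain ⟨hmZ, hmcl, hmD⟩ := hmS
  -- m has an isolated point
  have hmne : m.Nonempty := by
    obtain ⟨x, hx, -⟩ := hmD hD.choose_spec
    exact ⟨x, hx⟩
  obtain ⟨x, hxm, U, hU, hUx⟩ : ∃ x ∈ m, ∃ U : Set X, IsOpen U ∧ U ∩ m = {x} := by
    by_contra h
    push_neg at h
    have : Perfect m := by
      refine ⟨hmcl, fun x hx => ?_⟩
      rw [accPt_iff_nhds]
      intro U hU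
      by_contra hcon
      push_neg at hcon
      obtain ⟨U', hU'U, hU'o, hxU'⟩ := mem_nhds_iff.1 hU
      have : U' ∩ m = {x} := by
        apply Subset.antisymm
        · rintro y ⟨hyU, hym⟩
          exact hcon y ⟨hU'U hyU, hym⟩
        · rintro y rfl; exact ⟨hxU', hx⟩
      exact h x hx U' hU'o this
    exact hmne.ne_empty (hscat m hmZ this)
  -- minimality contradiction
  set m' := m \ {x} with hm'
  have hm'cl : IsClosed m' := by
    have : m' = m ∩ Uᶜ := by
      rw [hm']
      apply Subset.antisymm
      · rintro y ⟨hym, hyx⟩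
        refine ⟨hym, fun hyU => hyx ?_⟩
        have : y ∈ U ∩ m := ⟨hyU, hym⟩
        rwa [hUx] at this
      · rintro y ⟨hym, hyU⟩
        refine ⟨hym, fun h => hyU ?_⟩
        rw [mem_singleton_iff] at h
        subst h
        have : y ∈ ({y} : Set X) := rfl
        rw [← hUx] at this
        exact this.1
    rw [this]
    exact hmcl.inter hU.isClosed_compl
  have hm'sub : m' ⊆ m := diff_subset
  have hm'ne : m' ≠ m := by
    intro h
    have : x ∈ m' := h ▸ hxm
    exact this.2 rfl
  -- so D ⊄ g '' m'
  have : ¬ D ⊆ g '' m' := by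
    intro hcon
    exact hm'ne (hmmin m' ⟨hm'sub.trans hmZ, hm'cl, hcon⟩ (hm'sub.trans subset_rfl))
  obtain ⟨d, hdD, hdnot⟩ := not_subset.1 this
  have hdgx : d = g x := by
    obtain ⟨y, hym, hgy⟩ := hmD hdD
    rcases eq_or_ne y x with rfl | hyx
    · exact hgy.symm
    · exact absurd ⟨y, ⟨hym, hyx⟩, hgy⟩ hdnot
  -- D \ {d} ⊆ g '' m', closed, so d is isolated in D: contradiction with perfectness
  have hDsub' : D \ {d} ⊆ g '' m' := by
    rintro e ⟨heD, hed⟩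
    obtain ⟨y, hym, hgy⟩ := hmD heD
    rcases eq_or_ne y x with rfl | hyx
    · exact absurd (hdgx.trans hgy).symm (by simpa using hed)
    · exact ⟨y, ⟨hym, hyx⟩, hgy⟩
  have hclosed : IsClosed (g '' m') := ((hZ.of_isClosed_subset hm'cl (hm'sub.trans hmZ)).image hg).isClosed
  have hacc := hDperf.acc d hdD
  rw [accPt_iff_nhds] at hacc
  obtain ⟨y, ⟨hy1, hy2⟩, hy3⟩ := hacc (g '' m')ᶜ (hclosed.isOpen_compl.mem_nhds (by rwa [mem_compl_iff]))
  exact hy1 (hDsub' ⟨hy2, hy3⟩)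


theorem exists_mem_Ioo_not_mem_countable {s : Set ℝ} (hs : s.Countable) {a b : ℝ} (hab : a < b) :
    ∃ t, t ∈ Ioo a b ∧ t ∉ s := by
  by_contra h
  push_neg at h
  have hsub : Ioo a b ⊆ s := fun t ht => h t ht
  have h0 : (MeasureTheory.volume (Ioo a b) : ENNReal) = 0 :=
    le_antisymm (le_trans (MeasureTheory.measure_mono hsub) (le_of_eq (hs.measure_zero MeasureTheory.volume))) (zero_le)
  rw [Real.volume_Ioo] at h0
  simp only [ENNReal.ofReal_eq_zero] at h0
  linarith

theorem resolvent_mem {X : Type*} [TopologicalSpace X] [CompactSpace X]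
    (A : Subalgebra ℂ C(X,ℂ)) (hAcl : IsClosed (A : Set C(X,ℂ)))
    {f : C(X,ℂ)} (hf : f ∈ A) (c : ℂ) {r : ℝ} (hr : 0 < r)
    (hsph : ∀ x, dist (f x) c ≠ r)
    (hcnt : {w : ℂ | w ∈ Set.range f ∧ r ≤ dist w c}.Countable) :
    ∀ w ∈ Metric.sphere c r, ∃ g ∈ A, g * (algebraMap ℂ C(X,ℂ) w - f) = 1 := by
  haveI : IsClosed (A : Set C(X,ℂ)) := hAcl
  haveI : CompleteSpace ↥A := hAcl.completeSpace_coe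
  -- pick a vertical line avoiding the countable far part of the range
  obtain ⟨t, htIoo, htbad⟩ := exists_mem_Ioo_not_mem_countable
    (Set.Countable.image hcnt Complex.re) (show c.re < c.re + r by linarith)
  have ht1 : 0 < t - c.re := by simp only [mem_Ioo] at htIoo; linarith
  have ht2 : t - c.re < r := by simp only [mem_Ioo] at htIoo; linarith
  have hssq : 0 ≤ r ^ 2 - (t - c.re) ^ 2 := by nlinarith
  set m : ℝ := c.im + Real.sqrt (r ^ 2 - (t - c.re) ^ 2) with hm
  set ray : Set ℂ := {z : ℂ | z.re = t ∧ m ≤ z.im} with hray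
  have hrayconv : Convex ℝ ray := by
    have h1 : Convex ℝ {z : ℂ | z.re = t} := by
      have : {z : ℂ | z.re = t} = {z : ℂ | z.re ≤ t} ∩ {z : ℂ | t ≤ z.re} := by
        ext z; simp [le_antisymm_iff, and_comm]
      rw [this]
      exact Convex.inter (convex_halfSpace_re_le (r := t)) (convex_halfSpace_re_ge (r := t))
    have h2 : Convex ℝ {z : ℂ | m ≤ z.im} := convex_halfSpace_im_ge m
    exact h1.inter h2
  set p : ℂ := Complex.mk t m with hp
  have hpsphere : p ∈ Metric.sphere c r := by
    rw [Metric.mem_sphere, Complex.dist_eq_re_im]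
    show Real.sqrt ((t - c.re) ^ 2 + (m - c.im) ^ 2) = r
    rw [hm]
    rw [add_sub_cancel_left, Real.sq_sqrt hssq]
    rw [add_sub_cancel]
    exact Real.sqrt_sq hr.le
  have hpray : p ∈ ray := ⟨rfl, le_refl m⟩
  set Γ : Set ℂ := Metric.sphere c r ∪ ray with hΓ
  have hΓconn : IsPreconnected Γ := by
    refine IsPreconnected.union p hpsphere hpray ?_ hrayconv.isPreconnected
    exact (isConnected_sphere (by rw [Complex.rank_real_complex]; exact Cardinal.one_lt_two) c hr.le).isPreconnected
  -- the ray stays at distance ≥ r from c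
  have hraydist : ∀ z ∈ ray, r ≤ dist z c := by
    rintro z ⟨hzre, hzim⟩
    rw [Complex.dist_eq_re_im, hzre]
    have him : Real.sqrt (r ^ 2 - (t - c.re) ^ 2) ≤ z.im - c.im := by
      rw [hm] at hzim; linarith
    have h2 : r ^ 2 - (t - c.re) ^ 2 ≤ (z.im - c.im) ^ 2 := by
      calc r ^ 2 - (t - c.re) ^ 2 = Real.sqrt (r ^ 2 - (t - c.re) ^ 2) ^ 2 :=
            (Real.sq_sqrt hssq).symm
        _ ≤ (z.im - c.im) ^ 2 := by
            apply sq_le_sq'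
            · nlinarith [Real.sqrt_nonneg (r ^ 2 - (t - c.re) ^ 2)]
            · exact him
    calc r = Real.sqrt (r ^ 2) := (Real.sqrt_sq hr.le).symm
      _ ≤ Real.sqrt ((t - c.re) ^ 2 + (z.im - c.im) ^ 2) := by
          apply Real.sqrt_le_sqrt; nlinarith
  -- Γ misses the range of f
  have hΓdisj : ∀ z ∈ Γ, z ∉ Set.range f := by
    rintro z (hz | hz) ⟨x, rfl⟩
    · exact hsph x (by simpa [Complex.dist_eq] using hz)
    · have h1 : r ≤ dist (f x) c := hraydist _ hz
      have : (f x) ∈ {w : ℂ | w ∈ Set.range f ∧ r ≤ dist w c} := ⟨⟨x, rfl⟩, h1⟩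
      exact htbad ⟨f x, this, hz.1⟩
  -- Γ is unbounded
  have hΓunb : ¬ Bornology.IsBounded Γ := by
    intro hb
    obtain ⟨C, hC⟩ := isBounded_iff_forall_norm_le.1 hb
    set q : ℂ := Complex.mk t (max m (|C| + 1)) with hq
    have hqray : q ∈ ray := ⟨rfl, le_max_left _ _⟩
    have := hC q (Or.inr hqray)
    have him : |q.im| ≤ ‖q‖ := by exact Complex.abs_im_le_norm q
    have : |C| + 1 ≤ ‖q‖ := le_trans (le_trans (le_max_right m _) (le_abs_self _)) him
    have hCabs : C ≤ |C| := le_abs_self C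
    linarith [hC q (Or.inr hqray)]
  -- the spectrum argument
  set x : ↥A := ⟨f, hf⟩ with hx
  have hspec : spectrum ℂ (x : C(X,ℂ)) = Set.range f := ContinuousMap.spectrum_eq_range f
  intro w hw
  have hwΓ : w ∈ Γ := Or.inl hw
  have hwnot : w ∉ spectrum ℂ x := by
    intro hsp
    have hbdd := Subalgebra.spectrum_isBounded_connectedComponentIn A x hsp
    have hsub : Γ ⊆ connectedComponentIn (spectrum ℂ (x : C(X,ℂ)))ᶜ w := by
      apply hΓconn.subset_connectedComponentIn hwΓ
      intro z hz
      rw [hspec]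
      exact hΓdisj z hz
    exact hΓunb (hbdd.subset hsub)
  rw [spectrum.notMem_iff] at hwnot
  obtain ⟨u, hu⟩ := hwnot
  refine ⟨((u⁻¹ : (↥A)ˣ) : ↥A), SetLike.coe_mem _, ?_⟩
  have h1 : ((u⁻¹ : (↥A)ˣ) : ↥A) * (algebraMap ℂ ↥A w - x) = 1 := by
    rw [← hu]; exact u.inv_mul
  have h2 := congrArg (A.val) h1
  simpa [map_mul, map_sub, AlgHom.commutes] using h2


theorem intervalIntegral_mem_of_closed {E : Type*} [NormedAddCommGroup E] [NormedSpace ℝ E] [CompleteSpace E]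
    (M : Submodule ℝ E) (hM : IsClosed (M : Set E)) {F : ℝ → E} {a b : ℝ} (hab : a < b)
    (hF : Continuous F) (hmem : ∀ θ, F θ ∈ M) : (∫ θ in a..b, F θ) ∈ M := by
  rw [intervalIntegral.integral_of_le hab.le]
  set μ := MeasureTheory.volume.restrict (Set.Ioc a b) with hμ
  haveI hfin : IsFiniteMeasure μ := by
    constructor
    rw [hμ, MeasureTheory.Measure.restrict_apply_univ, Real.volume_Ioc]
    exact ENNReal.ofReal_lt_top
  haveI hne : NeZero μ := by
    constructor
    intro h0
    have : μ Set.univ = 0 := by rw [h0]; simp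
    rw [hμ, MeasureTheory.Measure.restrict_apply_univ, Real.volume_Ioc] at this
    rw [ENNReal.ofReal_eq_zero] at this
    linarith
  have hint : MeasureTheory.Integrable F μ := hF.integrableOn_Ioc
  have havg : (⨍ θ, F θ ∂μ) ∈ M :=
    (M.convex).average_mem hM (Filter.Eventually.of_forall hmem) hint
  have hμu : (μ Set.univ).toReal = b - a := by
    rw [hμ, MeasureTheory.Measure.restrict_apply_univ, Real.volume_Ioc]
    exact ENNReal.toReal_ofReal (by linarith)
  have : (∫ θ, F θ ∂μ) = (μ Set.univ).toReal • (⨍ θ, F θ ∂μ) := by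
    rw [MeasureTheory.average_eq, smul_smul, MeasureTheory.measureReal_def, mul_inv_cancel₀ (by rw [hμu]; linarith), one_smul]
  rw [this]
  exact M.smul_mem _ havg

theorem cauchy_piece {X : Type*} [TopologicalSpace X] [CompactSpace X]
    (A : Subalgebra ℂ C(X,ℂ)) (hAcl : IsClosed (A : Set C(X,ℂ)))
    {f : C(X,ℂ)} (hf : f ∈ A) (c : ℂ) {r : ℝ} (hr : 0 < r)
    (hsph : ∀ x, dist (f x) c ≠ r)
    (hres : ∀ w ∈ Metric.sphere c r, ∃ g ∈ A, g * (algebraMap ℂ C(X,ℂ) w - f) = 1)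
    {p : ℂ → ℂ} (hp : Differentiable ℂ p) :
    ∃ h ∈ A, ∀ x : X, h x = if dist (f x) c < r then p (f x) else 0 := by
  -- notation
  set γ : ℝ → ℂ := circleMap c r with hγ
  have hγsph : ∀ θ, γ θ ∈ Metric.sphere c r := fun θ => circleMap_mem_sphere c hr.le θ
  have hne : ∀ θ x, γ θ - f x ≠ 0 := by
    intro θ x h0
    apply hsph x
    have : f x = γ θ := by linear_combination -h0
    rw [this]; exact hγsph θ
  -- the resolvent along the circle, as an explicit continuous map
  set Rz : ℝ → C(X, ℂ) := fun θ =>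
    ⟨fun x => (γ θ - f x)⁻¹, ((continuous_const.sub f.continuous).inv₀ (hne θ)) ⟩ with hRz
  have hRzunit : ∀ θ, (algebraMap ℂ C(X,ℂ) (γ θ) - f) * Rz θ = 1 := by
    intro θ; ext x
    simp only [ContinuousMap.mul_apply, ContinuousMap.sub_apply, ContinuousMap.coe_mk,
      ContinuousMap.one_apply, algebraMap_apply, smul_eq_mul, mul_one]
    exact mul_inv_cancel₀ (hne θ x)
  have hRzinv : ∀ θ, Ring.inverse (algebraMap ℂ C(X,ℂ) (γ θ) - f) = Rz θ := by
    intro θ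
    have hu : IsUnit (algebraMap ℂ C(X,ℂ) (γ θ) - f) :=
      IsUnit.of_mul_eq_one _ (hRzunit θ)
    set U : C(X,ℂ)ˣ := ⟨algebraMap ℂ C(X,ℂ) (γ θ) - f, Rz θ, hRzunit θ,
      by rw [mul_comm]; exact hRzunit θ⟩ with hU
    exact Ring.inverse_unit U
  have hRzmem : ∀ θ, Rz θ ∈ A := by
    intro θ
    obtain ⟨g, hgA, hg⟩ := hres (γ θ) (hγsph θ)
    have : g = Rz θ := by
      have h1 : g * ((algebraMap ℂ C(X,ℂ) (γ θ) - f) * Rz θ) = g := by rw [hRzunit θ, mul_one]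
      calc g = g * ((algebraMap ℂ C(X,ℂ) (γ θ) - f) * Rz θ) := h1.symm
        _ = (g * (algebraMap ℂ C(X,ℂ) (γ θ) - f)) * Rz θ := by ring
        _ = 1 * Rz θ := by rw [hg]
        _ = Rz θ := one_mul _
    rwa [← this]
  have hRzcont : Continuous Rz := by
    rw [continuous_iff_continuousAt]
    intro θ
    set G : ℝ → C(X,ℂ) := fun θ => algebraMap ℂ C(X,ℂ) (γ θ) - f with hG
    have h1 : Continuous G :=
      ((continuous_algebraMap ℂ C(X,ℂ)).comp (continuous_circleMap c r)).sub continuous_const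
    have hu : IsUnit (G θ) := IsUnit.of_mul_eq_one _ (hRzunit θ)
    have h2 : ContinuousAt Ring.inverse (G θ) := by
      have := NormedRing.inverse_continuousAt hu.unit
      rwa [IsUnit.unit_spec] at this
    have h3 : ContinuousAt (fun θ => Ring.inverse (G θ)) θ :=
      ContinuousAt.comp h2 h1.continuousAt
    have he : (fun θ => Ring.inverse (G θ)) = Rz := funext hRzinv
    rwa [he] at h3
  -- the integrand
  set F : ℝ → C(X,ℂ) := fun θ => deriv γ θ • (p (γ θ) • Rz θ) with hF
  have hFcont : Continuous F := by
    refine Continuous.smul (f := fun θ => deriv γ θ) (g := fun θ => p (γ θ) • Rz θ) ?_ ?_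
    · have : deriv γ = fun θ => circleMap 0 r θ * Complex.I := funext (deriv_circleMap c r)
      rw [this]
      exact ((continuous_circleMap 0 r).mul continuous_const)
    · exact ((hp.continuous.comp (continuous_circleMap c r)).smul hRzcont)
  have hFmem : ∀ θ, F θ ∈ A := fun θ =>
    A.toSubmodule.smul_mem _ (A.toSubmodule.smul_mem _ (hRzmem θ))
  -- the integral
  set h : C(X,ℂ) := (2 * Real.pi * Complex.I)⁻¹ • ∫ θ in (0:ℝ)..(2*Real.pi), F θ with hh
  have hmemA : h ∈ A := by
    apply A.toSubmodule.smul_mem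
    have := intervalIntegral_mem_of_closed (M := (A.toSubmodule.restrictScalars ℝ))
      (by exact hAcl) (a := 0) (b := 2*Real.pi) (by positivity) hFcont (fun θ => hFmem θ)
    exact this
  refine ⟨h, hmemA, ?_⟩
  intro x
  -- evaluate pointwise
  have hev : h x = (2 * Real.pi * Complex.I)⁻¹ •
      ∮ z in C(c, r), (z - f x)⁻¹ • p z := by
    have e1 : h x = (ContinuousMap.evalCLM ℂ x) h := rfl
    rw [e1, hh, ContinuousLinearMap.map_smul]
    congr 1
    rw [← ContinuousLinearMap.intervalIntegral_comp_comm _ (hFcont.intervalIntegrable 0 (2*Real.pi))]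
    rw [circleIntegral]
    congr 1
    ext θ
    show (F θ) x = _
    simp only [hF, ContinuousMap.smul_apply, ContinuousMap.coe_mk, hRz, hγ,
      smul_eq_mul]
    ring
  rcases lt_trichotomy (dist (f x) c) r with hlt | heq | hgt
  · rw [if_pos hlt, hev]
    have hball : f x ∈ Metric.ball c r := by rwa [Metric.mem_ball]
    rw [DiffContOnCl.circleIntegral_sub_inv_smul (hp.diffContOnCl) hball]
    rw [smul_smul, inv_mul_cancel₀ (by simp [Real.pi_ne_zero, Complex.I_ne_zero,
      Complex.ext_iff, Real.pi_pos.ne']), one_smul]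
  · exact absurd heq (hsph x)
  · rw [if_neg (by linarith), hev]
    have hzero : (∮ z in C(c, r), (z - f x)⁻¹ • p z) = 0 := by
      apply Complex.circleIntegral_eq_zero_of_differentiable_on_off_countable hr.le
        Set.countable_empty
      · intro z hz
        apply ContinuousAt.continuousWithinAt
        have hzne : z - f x ≠ 0 := by
          intro h0
          have : z = f x := by linear_combination h0
          rw [Metric.mem_closedBall, this] at hz
          linarith
        exact ((continuousAt_id.sub continuousAt_const).inv₀ hzne).smul (hp.continuous.continuousAt)
      · intro z hz
        rcases hz with ⟨hz1, -⟩
        have hzne : z - f x ≠ 0 := by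
          intro h0
          have : z = f x := by linear_combination h0
          rw [this, Metric.mem_ball] at hz1
          linarith
        exact (((differentiableAt_id (x := z)).sub (differentiableAt_const (f x))).inv hzne).smul (hp z)
    rw [hzero, smul_zero]

/-- Truncation: an element of `A` that is small on `K` agrees on `K` with a small element of `A`. -/
theorem trunc {X : Type*} [TopologicalSpace X] [CompactSpace X] [T2Space X]
    (K : Set X) [CompactSpace ↥K] [Nonempty ↥K]
    (hKmax : ∀ P : Set X, Perfect P → P ⊆ K)
    (A : Subalgebra ℂ C(X,ℂ)) (hAcl : IsClosed (A : Set C(X,ℂ)))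
    {f : C(X,ℂ)} (hf : f ∈ A) {ε : ℝ}
    (hε : ‖f.restrict K‖ < ε) :
    ∃ h ∈ A, h.restrict K = f.restrict K ∧ ‖h‖ ≤ ε := by
  set δ : ℝ := ‖f.restrict K‖ with hδ
  have hδ0 : 0 ≤ δ := norm_nonneg _
  have hKbound : ∀ x ∈ K, ‖f x‖ ≤ δ := by
    intro x hx
    have : (f.restrict K) ⟨x, hx⟩ = f x := rfl
    rw [← this]
    exact ContinuousMap.norm_coe_le_norm _ _
  -- the part of the range far from 0 is countable
  have hfar : {w : ℂ | w ∈ Set.range f ∧ δ < dist w 0}.Countable := by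
    have hsub : {w : ℂ | w ∈ Set.range f ∧ δ < dist w 0} ⊆
        ⋃ n : ℕ, f '' {x : X | δ + 1/(n+1) ≤ dist (f x) 0} := by
      rintro w ⟨⟨x, rfl⟩, hw⟩
      obtain ⟨n, hn⟩ := exists_nat_one_div_lt (show (0:ℝ) < dist (f x) 0 - δ by linarith)
      refine mem_iUnion.2 ⟨n, ⟨x, ?_, rfl⟩⟩
      show δ + 1/((n:ℝ)+1) ≤ dist (f x) 0
      linarith
    refine Set.Countable.mono hsub (Set.countable_iUnion fun n => ?_)
    set Z : Set X := {x : X | δ + 1/(n+1) ≤ dist (f x) 0} with hZ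
    have hZcl : IsClosed Z := isClosed_le continuous_const (f.continuous.dist continuous_const)
    have hZK : Z ∩ K = ∅ := by
      ext x
      simp only [mem_inter_iff, mem_empty_iff_false, iff_false, not_and]
      intro hxZ hxK
      have h1 := hKbound x hxK
      have h2 : δ + 1/((n:ℝ)+1) ≤ dist (f x) 0 := hxZ
      rw [dist_zero_right] at h2
      have : (0:ℝ) < 1/((n:ℝ)+1) := by positivity
      linarith
    apply countable_image_of_no_perfect hZcl.isCompact _ f.continuous
    intro P hPZ hP
    have hPK := hKmax P hP
    rw [← Set.subset_empty_iff, ← hZK]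
    exact Set.subset_inter hPZ hPK
  -- choose a good radius
  have hbad : ((fun w => dist w 0) '' {w : ℂ | w ∈ Set.range f ∧ δ < dist w 0}).Countable :=
    hfar.image _
  obtain ⟨r, hrIoo, hrbad⟩ := exists_mem_Ioo_not_mem_countable hbad hε
  rw [mem_Ioo] at hrIoo
  have hr0 : 0 < r := lt_of_le_of_lt hδ0 hrIoo.1
  have hsph : ∀ x, dist (f x) 0 ≠ r := by
    intro x hx
    exact hrbad ⟨f x, ⟨⟨x, rfl⟩, by rw [hx]; exact hrIoo.1⟩, hx⟩
  have hcnt : {w : ℂ | w ∈ Set.range f ∧ r ≤ dist w 0}.Countable := by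
    apply hfar.mono
    rintro w ⟨hw1, hw2⟩
    exact ⟨hw1, lt_of_lt_of_le hrIoo.1 hw2⟩
  have hres := resolvent_mem A hAcl hf 0 hr0 hsph hcnt
  obtain ⟨h, hhA, hh⟩ := cauchy_piece A hAcl hf 0 hr0 hsph hres differentiable_id
  refine ⟨h, hhA, ?_, ?_⟩
  · ext ⟨x, hx⟩
    have h1 : h x = if dist (f x) 0 < r then f x else 0 := hh x
    have h2 : dist (f x) 0 < r := by
      rw [Complex.dist_eq, sub_zero]
      calc ‖f x‖ = ‖f x‖ := rfl
        _ ≤ δ := hKbound x hx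
        _ < r := hrIoo.1
    show h x = f x
    rw [h1, if_pos h2]
  · have hε0 : (0:ℝ) ≤ ε := le_trans hδ0 (le_of_lt (lt_trans hrIoo.1 hrIoo.2))
    rw [ContinuousMap.norm_le _ hε0]
    intro x
    rw [hh x]
    by_cases hcase : dist (f x) 0 < r
    · rw [if_pos hcase]
      rw [dist_zero_right] at hcase
      exact le_of_lt (lt_trans hcase hrIoo.2)
    · rw [if_neg hcase]
      simpa using hε0

set_option maxHeartbeats 2000000 in
theorem restrict_isClosed {X : Type*} [TopologicalSpace X] [CompactSpace X] [T2Space X]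
    (K : Set X) [CompactSpace ↥K] [Nonempty ↥K]
    (hKmax : ∀ P : Set X, Perfect P → P ⊆ K)
    (A : Subalgebra ℂ C(X,ℂ)) (hAcl : IsClosed (A : Set C(X,ℂ))) :
    IsClosed {g : C(↥K, ℂ) | ∃ f ∈ A, f.restrict K = g} := by
  apply isClosed_of_closure_subset
  intro g hg
  -- choose approximating sequence
  have hchoice : ∀ n : ℕ, ∃ u : C(X,ℂ), u ∈ A ∧ dist g (u.restrict K) < (1/2)^n * (1/8) := by
    intro n
    have hpos : (0:ℝ) < (1/2)^n * (1/8) := by positivity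
    obtain ⟨b, hb, hdist⟩ := Metric.mem_closure_iff.1 hg _ hpos
    obtain ⟨u, huA, hu⟩ := hb
    exact ⟨u, huA, by rwa [hu]⟩
  choose u huA hud using hchoice
  set a : ℕ → C(↥K, ℂ) := fun n => (u n).restrict K with ha
  have halim : Filter.Tendsto a Filter.atTop (nhds g) := by
    rw [Metric.tendsto_atTop]
    intro ε hε
    obtain ⟨N, hN⟩ := exists_pow_lt_of_lt_one (show (0:ℝ) < ε by linarith) (by norm_num : (1/2:ℝ) < 1)
    refine ⟨N, fun n hn => ?_⟩
    rw [dist_comm]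
    calc dist g (a n) < (1/2)^n * (1/8) := hud n
      _ ≤ (1/2)^N * (1/8) := by
          apply mul_le_mul_of_nonneg_right _ (by norm_num)
          exact pow_le_pow_of_le_one (by norm_num) (by norm_num) hn
      _ ≤ (1/2)^N * 1 := by
          apply mul_le_mul_of_nonneg_left (by norm_num) (by positivity)
      _ = (1/2)^N := mul_one _
      _ < ε := hN
  -- restriction as a continuous linear map
  have hrest_sub : ∀ (v w : C(X,ℂ)), (v - w).restrict K = v.restrict K - w.restrict K := by
    intro v w; ext x; rfl
  have hrest_norm : ∀ v : C(X,ℂ), ‖v.restrict K‖ ≤ ‖v‖ := by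
    intro v
    rw [ContinuousMap.norm_le _ (norm_nonneg v)]
    intro x
    exact ContinuousMap.norm_coe_le_norm v x
  -- truncated corrections
  have hdn : ∀ n : ℕ, ∃ h ∈ A, h.restrict K = (u (n+1) - u n).restrict K ∧ ‖h‖ ≤ (1/2)^n * (1/4) := by
    intro n
    apply trunc K hKmax A hAcl (A.sub_mem (huA (n+1)) (huA n))
    rw [hrest_sub]
    calc ‖(u (n+1)).restrict K - (u n).restrict K‖
        = dist ((u (n+1)).restrict K) ((u n).restrict K) := by rw [dist_eq_norm]
      _ ≤ dist ((u (n+1)).restrict K) g + dist g ((u n).restrict K) := dist_triangle _ _ _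
      _ < (1/2)^(n+1) * (1/8) + (1/2)^n * (1/8) := by
          have h1 := hud (n+1)
          have h2 := hud n
          rw [dist_comm] at h1
          linarith
      _ ≤ (1/2)^n * (1/4) := by
          rw [pow_succ]
          nlinarith [pow_pos (show (0:ℝ) < 1/2 by norm_num) n]
  choose h hhA hhrest hhnorm using hdn
  -- the sum
  have hsummable : Summable h := by
    apply Summable.of_norm_bounded (summable_geometric_two.mul_right (1/4)) hhnorm
  set F : C(X,ℂ) := u 0 + ∑' n, h n with hF
  have hFA : F ∈ A := by
    have htend : Filter.Tendsto (fun N => u 0 + ∑ i ∈ Finset.range N, h i)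
        Filter.atTop (nhds F) := by
      exact Filter.Tendsto.const_add _ hsummable.hasSum.tendsto_sum_nat
    apply hAcl.mem_of_tendsto htend
    filter_upwards with N
    exact A.add_mem (huA 0) (Submodule.sum_mem A.toSubmodule fun i _ => hhA i)
  refine ⟨F, hFA, ?_⟩
  -- compute the restriction of F
  have hρcont : Continuous (fun v : C(X,ℂ) => v.restrict K) := by
    apply Metric.continuous_iff.2
    intro v ε hε
    refine ⟨ε, hε, fun w hw => ?_⟩
    rw [dist_eq_norm] at *
    calc ‖w.restrict K - v.restrict K‖ = ‖(w - v).restrict K‖ := by rw [hrest_sub]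
      _ ≤ ‖w - v‖ := hrest_norm _
      _ < ε := hw
  have hressum : Filter.Tendsto (fun N => (u 0 + ∑ i ∈ Finset.range N, h i).restrict K)
      Filter.atTop (nhds (F.restrict K)) := by
    exact (hρcont.tendsto F).comp (Filter.Tendsto.const_add _ hsummable.hasSum.tendsto_sum_nat)
  -- but these restrictions telescope to a (N)
  have hteleq : ∀ N, (u 0 + ∑ i ∈ Finset.range N, h i).restrict K = a N := by
    intro N
    ext x
    show (u 0) x + (∑ i ∈ Finset.range N, h i) x = (u N) x
    have hsum_apply : (∑ i ∈ Finset.range N, h i) x = ∑ i ∈ Finset.range N, (h i) x := by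
      induction N with
      | zero => simp
      | succ n ih => rw [Finset.sum_range_succ, Finset.sum_range_succ, ← ih]; rfl
    rw [hsum_apply]
    have hterm : ∀ i, (h i) x = (u (i+1)) x - (u i) x := by
      intro i
      have := congrArg (fun v => v x) (congrArg (fun v : C(↥K,ℂ) => v) ((hhrest i)))
      have h2 : (h i).restrict K x = ((u (i+1) - u i).restrict K) x := by rw [hhrest i]
      simpa [ContinuousMap.restrict_apply] using h2
    rw [Finset.sum_congr rfl (fun i _ => hterm i), Finset.sum_range_sub (fun i => (u i) x)]
    ring
  rw [funext hteleq] at hressum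
  exact tendsto_nhds_unique hressum halim

/-- Let `X` be a compact Hausdorff non-scattered space with perfect kernel `K`
(the largest perfect subset, nonempty), and `A ≤ C(X, ℂ)` a closed subalgebra
separating points.  Then `A↾K` is closed in `C(K, ℂ)`, and every clopen subset of `K`
whose characteristic function lies in `A↾K` is of the form `H ∩ K` for some clopen
`H ⊆ X` with `χ_H ∈ A`. -/
theorem stmt10 {X : Type*} [TopologicalSpace X] [CompactSpace X] [T2Space X]
    (K : Set X) (hKperf : Perfect K) (hKne : K.Nonempty)
    (hKmax : ∀ P : Set X, Perfect P → P ⊆ K)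
    (A : Subalgebra ℂ C(X, ℂ)) (hA : A.SeparatesPoints)
    (hAcl : IsClosed (A : Set C(X, ℂ))) :
    IsClosed (restrictSet A K) ∧
      ∀ J : Set K, IsClopen J →
        (∃ f ∈ A, ∀ x : K, f.restrict K x = if x ∈ J then (1 : ℂ) else 0) →
        ∃ H : Set X, IsClopen H ∧ chiMem A H ∧ J = Subtype.val ⁻¹' H := by
  haveI : Nonempty X := ⟨hKne.choose⟩
  haveI : CompactSpace ↥K := isCompact_iff_compactSpace.mp hKperf.closed.isCompact
  haveI : Nonempty ↥K := ⟨⟨hKne.choose, hKne.choose_spec⟩⟩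
  constructor
  · exact restrict_isClosed K hKmax A hAcl
  · intro J hJ hex
    obtain ⟨f, hfA, hfJ⟩ := hex
    have hfK : ∀ (x : X) (hx : x ∈ K), f x = if (⟨x, hx⟩ : ↥K) ∈ J then (1:ℂ) else 0 := by
      intro x hx
      have := hfJ ⟨x, hx⟩
      rwa [ContinuousMap.restrict_apply] at this
    -- the range of f is countable
    have hrange : (Set.range f).Countable := by
      have hsub : Set.range f ⊆ {0, 1} ∪
          ⋃ n : ℕ, f '' {x : X | 1/(n+1) ≤ dist (f x) 0 ∧ 1/(n+1) ≤ dist (f x) 1} := by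
        rintro w ⟨x, rfl⟩
        by_cases h0 : f x = 0
        · exact Or.inl (Or.inl h0)
        by_cases h1 : f x = 1
        · exact Or.inl (Or.inr h1)
        have hd0 : 0 < dist (f x) 0 := dist_pos.2 h0
        have hd1 : 0 < dist (f x) 1 := dist_pos.2 h1
        obtain ⟨n, hn⟩ := exists_nat_one_div_lt (show (0:ℝ) < min (dist (f x) 0) (dist (f x) 1)
          from lt_min hd0 hd1)
        refine Or.inr (mem_iUnion.2 ⟨n, ⟨x, ⟨?_, ?_⟩, rfl⟩⟩)
        · exact le_of_lt (lt_of_lt_of_le hn (min_le_left _ _))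
        · exact le_of_lt (lt_of_lt_of_le hn (min_le_right _ _))
      refine Set.Countable.mono hsub (Set.Countable.union (by simp) ?_)
      refine Set.countable_iUnion fun n => ?_
      set Z : Set X := {x : X | 1/(n+1) ≤ dist (f x) 0 ∧ 1/(n+1) ≤ dist (f x) 1} with hZ
      have hZcl : IsClosed Z :=
        (isClosed_le continuous_const (f.continuous.dist continuous_const)).inter
          (isClosed_le continuous_const (f.continuous.dist continuous_const))
      have hpos : (0:ℝ) < 1/((n:ℝ)+1) := by positivity
      have hZK : ∀ x ∈ Z, x ∉ K := by
        rintro x ⟨hx0, hx1⟩ hxK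
        rw [hfK x hxK] at hx0 hx1
        by_cases hJx : (⟨x, hxK⟩ : ↥K) ∈ J
        · rw [if_pos hJx] at hx1; simp at hx1; linarith
        · rw [if_neg hJx] at hx0; simp at hx0; linarith
      apply countable_image_of_no_perfect hZcl.isCompact _ f.continuous
      intro P hPZ hP
      rw [Set.eq_empty_iff_forall_notMem]
      intro y hy
      exact hZK y (hPZ hy) (hKmax P hP hy)
    -- choose a radius
    obtain ⟨r, hrIoo, hrbad⟩ := exists_mem_Ioo_not_mem_countable
      (hrange.image (fun w => dist w 1)) (show (0:ℝ) < 1 by norm_num)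
    rw [mem_Ioo] at hrIoo
    have hsph : ∀ x, dist (f x) 1 ≠ r := by
      intro x hx
      exact hrbad ⟨f x, ⟨x, rfl⟩, hx⟩
    have hcnt : {w : ℂ | w ∈ Set.range f ∧ r ≤ dist w 1}.Countable :=
      hrange.mono (fun w hw => hw.1)
    have hres := resolvent_mem A hAcl hfA 1 hrIoo.1 hsph hcnt
    obtain ⟨e, heA, he⟩ := cauchy_piece A hAcl hfA 1 hrIoo.1 hsph hres
      (differentiable_const (1:ℂ))
    set H : Set X := {x : X | dist (f x) 1 < r} with hH
    have hHopen : IsOpen H := isOpen_lt (f.continuous.dist continuous_const) continuous_const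
    have hHclosed : IsClosed H := by
      have : H = {x : X | dist (f x) 1 ≤ r} := by
        ext x
        simp only [hH, mem_setOf_eq]
        constructor
        · exact le_of_lt
        · intro h; exact lt_of_le_of_ne h (hsph x)
      rw [this]
      exact isClosed_le (f.continuous.dist continuous_const) continuous_const
    refine ⟨H, ⟨hHclosed, hHopen⟩, ⟨e, heA, ?_⟩, ?_⟩
    · intro x
      rw [he x]
      by_cases hx : dist (f x) 1 < r
      · rw [if_pos hx, if_pos (show x ∈ H from hx)]
      · rw [if_neg hx, if_neg (show x ∉ H from hx)]
    · ext ⟨x, hx⟩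
      simp only [Set.mem_preimage]
      have hfx := hfK x hx
      constructor
      · intro hJx
        have hfx1 : f x = 1 := by rw [hfx, if_pos hJx]
        show dist (f x) 1 < r
        rw [hfx1]
        simpa using hrIoo.1
      · intro hHx
        by_contra hJx
        rw [if_neg hJx] at hfx
        have : dist (f x) 1 < r := hHx
        rw [hfx] at this
        have h01 : dist (0:ℂ) 1 = 1 := by simp [Complex.dist_eq]
        rw [h01] at this
        linarith
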